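/- For every integer k ≥ 2, there exists a uniquely k-dimensional finite connected simple graph of order 3k. -/

import Mathlib

open SimpleGraph

/-- `W` is a resolving set for `G`: any two distinct vertices are distinguished
by their distance to some vertex of `W`. -/
def IsResolvingSet {V : Type*} (G : SimpleGraph V) (W : Finset V) : Prop :=
  ∀ u v : V, u ≠ v → ∃ w ∈ W, G.dist u w ≠ G.dist v w

/-- The metric dimension of `G`: the minimum cardinality of a resolving set. -/
noncomputable def metricDim {V : Type*} (G : SimpleGraph V) : ℕ :=
  sInf {k | ∃ W : Finset V, IsResolvingSet G W ∧ W.card = k}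

/-- `B` is a metric basis: a resolving set of minimum cardinality. -/
def IsMetricBasis {V : Type*} (G : SimpleGraph V) (B : Finset V) : Prop :=
  IsResolvingSet G B ∧ B.card = metricDim G

/-- `G` is uniquely dimensional: it has exactly one metric basis. -/
def UniquelyDimensional {V : Type*} (G : SimpleGraph V) : Prop :=
  ∃! B : Finset V, IsMetricBasis G B

/-- `G` is uniquely `k`-dimensional: a unique metric basis and metric dimension `k`. -/
def UniquelyKDimensional {V : Type*} (G : SimpleGraph V) (k : ℕ) : Prop :=
  UniquelyDimensional G ∧ metricDim G = k





/-- adjacency version of resolving, for diameter-2 graphs -/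
def AdjRes {V : Type*} (G : SimpleGraph V) (W : Finset V) : Prop :=
  ∀ u v : V, u ≠ v → u ∈ W ∨ v ∈ W ∨ ∃ w ∈ W, ¬ (G.Adj u w ↔ G.Adj v w)

section diam2
variable {V : Type*} {G : SimpleGraph V}

/-- diameter-2 hypothesis -/
def Diam2 (G : SimpleGraph V) : Prop :=
  ∀ x y : V, x ≠ y → ¬ G.Adj x y → ∃ w, G.Adj x w ∧ G.Adj w y

theorem Diam2.reachable (h2 : Diam2 G) (x y : V) : G.Reachable x y := by
  by_cases hxy : x = y
  · exact hxy ▸ Reachable.refl x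
  by_cases ha : G.Adj x y
  · exact ha.reachable
  obtain ⟨w, h1, h3⟩ := h2 x y hxy ha
  exact h1.reachable.trans h3.reachable

theorem Diam2.connected [Nonempty V] (h2 : Diam2 G) : G.Connected :=
  ⟨fun x y => h2.reachable x y⟩

theorem Diam2.dist_eq_two (h2 : Diam2 G) {x y : V} (hxy : x ≠ y) (ha : ¬ G.Adj x y) :
    G.dist x y = 2 := by
  obtain ⟨w, h1, h3⟩ := h2 x y hxy ha
  have hle : G.dist x y ≤ 2 := by
    have := SimpleGraph.dist_le (Walk.cons h1 (Walk.cons h3 Walk.nil))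
    simpa using this
  have hpos : 0 < G.dist x y := (h2.reachable x y).pos_dist_of_ne hxy
  have hne1 : G.dist x y ≠ 1 := fun h => ha (dist_eq_one_iff_adj.mp h)
  omega

theorem Diam2.dist_pos (h2 : Diam2 G) {x y : V} (hxy : x ≠ y) : 0 < G.dist x y :=
  (h2.reachable x y).pos_dist_of_ne hxy

theorem Diam2.resolving_iff (h2 : Diam2 G) (W : Finset V) :
    IsResolvingSet G W ↔ AdjRes G W := by
  have hd : ∀ a b : V, a ≠ b → ¬ G.Adj a b → G.dist a b = 2 := fun a b h h' => h2.dist_eq_two h h'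
  have h1 : ∀ a b : V, G.Adj a b → G.dist a b = 1 := fun a b h => dist_eq_one_iff_adj.mpr h
  constructor
  · intro hres u v huv
    by_cases hu : u ∈ W
    · exact Or.inl hu
    by_cases hv : v ∈ W
    · exact Or.inr (Or.inl hv)
    refine Or.inr (Or.inr ?_)
    obtain ⟨w, hw, hdist⟩ := hres u v huv
    refine ⟨w, hw, fun hiff => hdist ?_⟩
    have hwu : u ≠ w := fun h => hu (h ▸ hw)
    have hwv : v ≠ w := fun h => hv (h ▸ hw)
    by_cases hA : G.Adj u w
    · rw [h1 u w hA, h1 v w (hiff.mp hA)]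
    · rw [hd u w hwu hA, hd v w hwv (fun h => hA (hiff.mpr h))]
  · intro hres u v huv
    have dv0 : ∀ a b : V, a ≠ b → G.dist a b ≠ 0 := fun a b hab => (h2.dist_pos hab).ne'
    rcases hres u v huv with hu | hv | ⟨w, hw, hiff⟩
    · exact ⟨u, hu, by rw [SimpleGraph.dist_self]; exact (dv0 v u (Ne.symm huv)).symm⟩
    · exact ⟨v, hv, by rw [SimpleGraph.dist_self]; exact dv0 u v huv⟩
    · refine ⟨w, hw, ?_⟩
      by_cases hwu : u = w
      · subst hwu
        rw [SimpleGraph.dist_self]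
        exact (dv0 v u (Ne.symm huv)).symm
      by_cases hwv : v = w
      · subst hwv
        rw [SimpleGraph.dist_self]
        exact dv0 u v huv
      by_cases hA : G.Adj u w
      · have hB : ¬ G.Adj v w := fun h => hiff ⟨fun _ => h, fun _ => hA⟩
        rw [h1 u w hA, hd v w hwv hB]; omega
      · have hB : G.Adj v w := by
          by_contra hB
          exact hiff ⟨fun h => absurd h hA, fun h => absurd h hB⟩
        rw [hd u w hwu hA, h1 v w hB]; omega

end diam2





theorem main_builder {V : Type*} (G : SimpleGraph V) (A : Finset V) (k : ℕ)
    (hres : IsResolvingSet G A) (hcard : A.card = k)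
    (hlow : ∀ W : Finset V, IsResolvingSet G W → k ≤ W.card)
    (huniq : ∀ B : Finset V, IsResolvingSet G B → B.card = k → B = A) :
    UniquelyKDimensional G k := by
  have hmem : k ∈ {n | ∃ W : Finset V, IsResolvingSet G W ∧ W.card = n} := ⟨A, hres, hcard⟩
  have hdim : metricDim G = k := by
    refine le_antisymm (Nat.sInf_le hmem) (le_csInf ⟨k, hmem⟩ ?_)
    rintro b ⟨W, hW, rfl⟩
    exact hlow W hW
  refine ⟨⟨A, ⟨hres, by rw [hdim, hcard]⟩, ?_⟩, hdim⟩
  rintro B ⟨hBres, hBcard⟩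
  exact huniq B hBres (by rw [hBcard, hdim])


section arith

theorem modk {k b : ℕ} (hk : 0 < k) (h : b < 3*k) :
    b % k = if b < k then b else if b < 2*k then b - k else b - 2*k := by
  split
  · exact Nat.mod_eq_of_lt ‹_›
  · next h1 =>
    split
    · next h2 =>
      rw [Nat.mod_eq_sub_mod (by omega)]
      exact Nat.mod_eq_of_lt (by omega)
    · next h2 =>
      rw [Nat.mod_eq_sub_mod (by omega), Nat.mod_eq_sub_mod (by omega)]
      have : b - k - k = b - 2*k := by omega
      rw [this]
      exact Nat.mod_eq_of_lt (by omega)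

theorem s_lt {k : ℕ} (hk : 0 < k) (a : ℕ) : (a+1) % k < k := Nat.mod_lt _ hk

theorem s_small {k a : ℕ} (hk : 0 < k) (ha : a < k) :
    (a+1) % k = if a+1 = k then 0 else a+1 := by
  split
  · next h => rw [h, Nat.mod_self]
  · next h => exact Nat.mod_eq_of_lt (by omega)

theorem s_inj {k a b : ℕ} (hk : 0 < k) (ha : a < k) (hb : b < k)
    (h : (a+1) % k = (b+1) % k) : a = b := by
  rw [s_small hk ha, s_small hk hb] at h
  split at h <;> split at h <;> omega

theorem s_ne {k a : ℕ} (hk : 2 ≤ k) (ha : a < k) : (a+1) % k ≠ a := by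
  rw [s_small (by omega) ha]; split <;> omega

theorem ss_ne {k a : ℕ} (hk : 3 ≤ k) (ha : a < k) : ((a+1) % k + 1) % k ≠ a := by
  rw [s_small (by omega) ha]
  split
  · next h => rw [s_small (by omega) (show 0+1-1 < k by omega)]; split <;> omega
  · next h =>
    rw [s_small (by omega) (show a+1 < k by omega)]
    split <;> omega

theorem exists_pred {k i : ℕ} (hk : 0 < k) (hi : i < k) :
    ∃ m, m < k ∧ (m+1) % k = i := by
  rcases Nat.eq_zero_or_pos i with h | h
  · exact ⟨k-1, by omega, by rw [show k-1+1 = k by omega, Nat.mod_self, h]⟩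
  · exact ⟨i-1, by omega, by rw [show i-1+1 = i by omega]; exact Nat.mod_eq_of_lt hi⟩

end arith

/-- attachment condition of pendant `j` to clique vertex of value `c` -/
def aok (k j c : ℕ) : Prop := j ≠ (c % k + 1) % k ∧ (2*k ≤ c → j ≠ c % k)

def GP (k x y : ℕ) : Prop := x < k ∧ k ≤ y ∧ aok k x y

def Gk (k : ℕ) : SimpleGraph (Fin (3*k)) where
  Adj x y := x ≠ y ∧ ((k ≤ x.val ∧ k ≤ y.val) ∨ GP k x.val y.val ∨ GP k y.val x.val)
  symm := by
    constructor; intro x y h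
    exact ⟨Ne.symm h.1, by tauto⟩
  loopless := by constructor; intro x h; exact h.1 rfl

section gk
variable {k : ℕ}

theorem gk_adj_cc (hk : 0 < k) {x y : Fin (3*k)} (hx : k ≤ x.val) (hy : k ≤ y.val)
    (hne : x ≠ y) : (Gk k).Adj x y := ⟨hne, Or.inl ⟨hx, hy⟩⟩

theorem gk_nadj_aa {x y : Fin (3*k)} (hx : x.val < k) (hy : y.val < k) :
    ¬ (Gk k).Adj x y := by
  rintro ⟨-, h | h | h⟩
  · omega
  · exact absurd h.2.1 (by omega)
  · exact absurd h.2.1 (by omega)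

theorem gk_adj_ac {x y : Fin (3*k)} (hx : x.val < k) (hy : k ≤ y.val) :
    (Gk k).Adj x y ↔ aok k x.val y.val := by
  constructor
  · rintro ⟨-, h | h | h⟩
    · omega
    · exact h.2.2
    · exact absurd h.2.1 (by omega)
  · intro h
    exact ⟨by intro he; rw [he] at hx; omega, Or.inr (Or.inl ⟨hx, hy, h⟩)⟩

/-- adjacency of pendant j to u-type vertex (value k+m) -/
theorem gk_adj_au (hk : 0 < k) {x y : Fin (3*k)} (hx : x.val < k) {m : ℕ} (hm : m < k)
    (hy : y.val = k + m) : (Gk k).Adj x y ↔ x.val ≠ (m+1) % k := by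
  have hmod : (k + m) % k = m := by
    rw [Nat.add_mod_left]
    exact Nat.mod_eq_of_lt hm
  rw [gk_adj_ac hx (by omega)]
  unfold aok
  rw [hy, hmod]
  constructor
  · exact fun h => h.1
  · exact fun h => ⟨h, by omega⟩

/-- adjacency of pendant j to v-type vertex (value 2k+m) -/
theorem gk_adj_av (hk : 0 < k) {x y : Fin (3*k)} (hx : x.val < k) {m : ℕ} (hm : m < k)
    (hy : y.val = 2*k + m) : (Gk k).Adj x y ↔ (x.val ≠ (m+1) % k ∧ x.val ≠ m) := by
  have hmod : (2*k + m) % k = m := by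
    rw [show 2*k + m = k + (k + m) by omega, Nat.add_mod_left, Nat.add_mod_left]
    exact Nat.mod_eq_of_lt hm
  rw [gk_adj_ac hx (by omega)]
  unfold aok
  rw [hy, hmod]
  constructor
  · exact fun h => ⟨h.1, h.2 (by omega)⟩
  · exact fun h => ⟨h.1, fun _ => h.2⟩

theorem gk_diam2 (hk : 3 ≤ k) : Diam2 (Gk k) := by
  have hk0 : 0 < k := by omega
  intro x y hne hnadj
  by_cases hx : k ≤ x.val
  · by_cases hy : k ≤ y.val
    · exact absurd (gk_adj_cc hk0 hx hy hne) hnadj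
    -- x clique, y pendant: use u_{y.val}
    · push_neg at hy
      refine ⟨⟨k + y.val, by omega⟩, ?_, ?_⟩
      · -- Adj x (u_{y.val}) : clique edge
        refine gk_adj_cc hk0 hx (by simp) ?_
        intro he
        rw [he] at hnadj
        exact hnadj (((Gk k).adj_symm) ((gk_adj_au hk0 hy hy rfl).mpr (fun h => s_ne (by omega) hy h.symm)))
      · exact ((Gk k).adj_symm) ((gk_adj_au hk0 hy hy rfl).mpr (fun h => s_ne (by omega) hy h.symm))
  · push_neg at hx
    by_cases hy : k ≤ y.val
    · -- x pendant, y clique: use u_{x.val}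
      refine ⟨⟨k + x.val, by omega⟩, ?_, ?_⟩
      · exact (gk_adj_au hk0 hx hx rfl).mpr (fun h => s_ne (by omega) hx h.symm)
      · refine gk_adj_cc hk0 (by simp) hy ?_
        intro he
        rw [← he] at hnadj
        exact hnadj ((gk_adj_au hk0 hx hx rfl).mpr (fun h => s_ne (by omega) hx h.symm))
    · -- both pendant
      push_neg at hy
      have hjl : x.val ≠ y.val := fun h => hne (Fin.ext h)
      -- find m < k with (m+1)%k ∉ {x.val, y.val}
      have hm : ∃ m, m < k ∧ (m+1) % k ≠ x.val ∧ (m+1) % k ≠ y.val := by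
        by_cases h0 : (0+1) % k ≠ x.val ∧ (0+1) % k ≠ y.val
        · exact ⟨0, by omega, h0⟩
        by_cases h1 : (1+1) % k ≠ x.val ∧ (1+1) % k ≠ y.val
        · exact ⟨1, by omega, h1⟩
        by_cases h2 : (2+1) % k ≠ x.val ∧ (2+1) % k ≠ y.val
        · exact ⟨2, by omega, h2⟩
        · exfalso
          push_neg at h0 h1 h2
          have d01 : (0+1) % k ≠ (1+1) % k := fun h => by
            have := s_inj hk0 (by omega) (by omega) h; omega
          have d02 : (0+1) % k ≠ (2+1) % k := fun h => by
            have := s_inj hk0 (by omega) (by omega) h; omega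
          have d12 : (1+1) % k ≠ (2+1) % k := fun h => by
            have := s_inj hk0 (by omega) (by omega) h; omega
          have m0 : (0+1) % k = x.val ∨ (0+1) % k = y.val := by
            by_cases hxx : (0+1) % k = x.val
            · exact Or.inl hxx
            · exact Or.inr (h0 hxx)
          have m1 : (1+1) % k = x.val ∨ (1+1) % k = y.val := by
            by_cases hxx : (1+1) % k = x.val
            · exact Or.inl hxx
            · exact Or.inr (h1 hxx)
          have m2 : (2+1) % k = x.val ∨ (2+1) % k = y.val := by
            by_cases hxx : (2+1) % k = x.val
            · exact Or.inl hxx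
            · exact Or.inr (h2 hxx)
          rcases m0 with e0 | e0 <;> rcases m1 with e1 | e1 <;> rcases m2 with e2 | e2 <;> omega
      obtain ⟨m, hmk, hm1, hm2⟩ := hm
      refine ⟨⟨k + m, by omega⟩, ?_, ?_⟩
      · exact (gk_adj_au hk0 hx hmk rfl).mpr (fun h => hm1 h.symm)
      · exact ((Gk k).adj_symm) ((gk_adj_au hk0 hy hmk rfl).mpr (fun h => hm2 h.symm))

end gk

section gk2
variable {k : ℕ}

theorem umod (hk : 0 < k) {m : ℕ} (hm : m < k) : (k + m) % k = m := by
  rw [Nat.add_mod_left]; exact Nat.mod_eq_of_lt hm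

theorem vmod (hk : 0 < k) {m : ℕ} (hm : m < k) : (2*k + m) % k = m := by
  rw [show 2*k + m = k + (k + m) by omega, Nat.add_mod_left, Nat.add_mod_left]
  exact Nat.mod_eq_of_lt hm

def Ak (k : ℕ) : Finset (Fin (3*k)) :=
  Finset.univ.map ⟨fun j : Fin k => ⟨j.val, by have := j.isLt; omega⟩,
    fun a b h => by simpa [Fin.ext_iff] using congrArg Fin.val h⟩

theorem mem_Ak {x : Fin (3*k)} : x ∈ Ak k ↔ x.val < k := by
  simp only [Ak, Finset.mem_map, Finset.mem_univ, true_and, Function.Embedding.coeFn_mk]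
  constructor
  · rintro ⟨j, rfl⟩; exact j.isLt
  · intro h; exact ⟨⟨x.val, h⟩, rfl⟩

theorem card_Ak : (Ak k).card = k := by simp [Ak]

theorem gk_resA (hk : 3 ≤ k) : AdjRes (Gk k) (Ak k) := by
  have hk0 : 0 < k := by omega
  intro u v hne
  by_cases hu : u.val < k
  · exact Or.inl (mem_Ak.mpr hu)
  by_cases hv : v.val < k
  · exact Or.inr (Or.inl (mem_Ak.mpr hv))
  refine Or.inr (Or.inr ?_)
  push_neg at hu hv
  have hu3 := u.isLt
  have hv3 := v.isLt
  -- helper producing the goal from a pendant index j with xor adjacency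
  have mk : ∀ (j : ℕ) (hj : j < k), ((Gk k).Adj ⟨j, by omega⟩ u ∧ ¬ (Gk k).Adj ⟨j, by omega⟩ v) ∨
      (¬ (Gk k).Adj ⟨j, by omega⟩ u ∧ (Gk k).Adj ⟨j, by omega⟩ v) →
      ∃ w ∈ Ak k, ¬ ((Gk k).Adj u w ↔ (Gk k).Adj v w) := by
    intro j hj h
    refine ⟨⟨j, by omega⟩, mem_Ak.mpr hj, ?_⟩
    intro hiff
    rcases h with ⟨h1, h2⟩ | ⟨h1, h2⟩
    · exact h2 ((Gk k).adj_symm (hiff.mp ((Gk k).adj_symm h1)))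
    · exact h1 ((Gk k).adj_symm (hiff.mpr ((Gk k).adj_symm h2)))
  by_cases hu2 : u.val < 2*k
  · have hmu : u.val = k + (u.val - k) := by omega
    have hmuk : u.val - k < k := by omega
    by_cases hv2 : v.val < 2*k
    · -- both u-type
      have hmv : v.val = k + (v.val - k) := by omega
      have hmvk : v.val - k < k := by omega
      have hne2 : u.val - k ≠ v.val - k := by
        intro h; exact hne (Fin.ext (by omega))
      apply mk ((v.val - k + 1) % k) (s_lt hk0 _)
      left
      constructor
      · rw [gk_adj_au hk0 (s_lt hk0 _) hmuk hmu]
        intro h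
        exact hne2 (s_inj hk0 hmvk hmuk h).symm
      · rw [gk_adj_au hk0 (s_lt hk0 _) hmvk hmv]
        simp
    · -- u is u-type, v is v-type
      have hmv : v.val = 2*k + (v.val - 2*k) := by omega
      have hmvk : v.val - 2*k < k := by omega
      by_cases hsame : u.val - k = v.val - 2*k
      · apply mk (u.val - k) hmuk
        left
        constructor
        · rw [gk_adj_au hk0 hmuk hmuk hmu]
          exact fun h => s_ne (by omega) hmuk h.symm
        · rw [gk_adj_av hk0 hmuk hmvk hmv]
          rintro ⟨-, h2⟩
          exact h2 hsame
      · apply mk ((v.val - 2*k + 1) % k) (s_lt hk0 _)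
        left
        constructor
        · rw [gk_adj_au hk0 (s_lt hk0 _) hmuk hmu]
          intro h
          exact hsame (s_inj hk0 hmvk hmuk h).symm
        · rw [gk_adj_av hk0 (s_lt hk0 _) hmvk hmv]
          rintro ⟨h1, -⟩
          exact h1 rfl
  · -- u is v-type
    have hmu : u.val = 2*k + (u.val - 2*k) := by omega
    have hmuk : u.val - 2*k < k := by omega
    by_cases hv2 : v.val < 2*k
    · -- v is u-type : symmetric to previous case
      have hmv : v.val = k + (v.val - k) := by omega
      have hmvk : v.val - k < k := by omega
      by_cases hsame : v.val - k = u.val - 2*k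
      · apply mk (v.val - k) hmvk
        right
        constructor
        · rw [gk_adj_av hk0 hmvk hmuk hmu]
          rintro ⟨-, h2⟩
          exact h2 hsame
        · rw [gk_adj_au hk0 hmvk hmvk hmv]
          exact fun h => s_ne (by omega) hmvk h.symm
      · apply mk ((u.val - 2*k + 1) % k) (s_lt hk0 _)
        right
        constructor
        · rw [gk_adj_av hk0 (s_lt hk0 _) hmuk hmu]
          rintro ⟨h1, -⟩
          exact h1 rfl
        · rw [gk_adj_au hk0 (s_lt hk0 _) hmvk hmv]
          intro h
          exact hsame (s_inj hk0 hmuk hmvk h).symm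
    · -- both v-type
      have hmv : v.val = 2*k + (v.val - 2*k) := by omega
      have hmvk : v.val - 2*k < k := by omega
      have hne2 : u.val - 2*k ≠ v.val - 2*k := by
        intro h; exact hne (Fin.ext (by omega))
      by_cases hs : (v.val - 2*k + 1) % k = u.val - 2*k
      · apply mk (v.val - 2*k) hmvk
        left
        constructor
        · rw [gk_adj_av hk0 hmvk hmuk hmu]
          constructor
          · intro h
            have h' : v.val - 2*k = (u.val - 2*k + 1) % k := h
            rw [h'] at hs
            exact ss_ne hk hmuk hs
          · exact fun h => hne2 (Eq.symm h)
        · rw [gk_adj_av hk0 hmvk hmvk hmv]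
          rintro ⟨-, h2⟩
          exact h2 rfl
      · apply mk ((v.val - 2*k + 1) % k) (s_lt hk0 _)
        left
        constructor
        · rw [gk_adj_av hk0 (s_lt hk0 _) hmuk hmu]
          constructor
          · intro h
            exact hne2 (s_inj hk0 hmvk hmuk h).symm
          · exact hs
        · rw [gk_adj_av hk0 (s_lt hk0 _) hmvk hmv]
          rintro ⟨h1, -⟩
          exact h1 rfl

theorem gk_hits (hk : 3 ≤ k) {W : Finset (Fin (3*k))} (hW : AdjRes (Gk k) W) :
    ∀ m, m < k → ∃ w ∈ W, w.val % k = m := by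
  have hk0 : 0 < k := by omega
  intro m hm
  have hum : ((⟨k + m, by omega⟩ : Fin (3*k))).val = k + m := rfl
  have hvm : ((⟨2*k + m, by omega⟩ : Fin (3*k))).val = 2*k + m := rfl
  have hne : (⟨k + m, by omega⟩ : Fin (3*k)) ≠ ⟨2*k + m, by omega⟩ :=
    Fin.ne_of_val_ne (show k + m ≠ 2*k + m by omega)
  rcases hW _ _ hne with h | h | ⟨w, hw, hiff⟩
  · exact ⟨_, h, by rw [hum]; exact umod hk0 hm⟩
  · exact ⟨_, h, by rw [hvm]; exact vmod hk0 hm⟩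
  · refine ⟨w, hw, ?_⟩
    by_cases hwk : w.val < k
    · have h1 := gk_adj_au hk0 hwk hm hum
      have h2 := gk_adj_av hk0 hwk hm hvm
      by_contra hne2
      have hwm : w.val ≠ m := by
        rw [Nat.mod_eq_of_lt hwk] at hne2; exact hne2
      apply hiff
      constructor
      · intro ha
        exact (Gk k).adj_symm (h2.mpr ⟨h1.mp ((Gk k).adj_symm ha), hwm⟩)
      · intro hb
        exact (Gk k).adj_symm (h1.mpr (h2.mp ((Gk k).adj_symm hb)).1)
    · push_neg at hwk
      by_contra hmod
      have hwu : w ≠ ⟨k + m, by omega⟩ := by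
        intro e; apply hmod; rw [e, hum]; exact umod hk0 hm
      have hwv : w ≠ ⟨2*k + m, by omega⟩ := by
        intro e; apply hmod; rw [e, hvm]; exact vmod hk0 hm
      apply hiff
      constructor
      · intro _; exact gk_adj_cc hk0 (by rw [hvm]; omega) hwk (Ne.symm hwv)
      · intro _; exact gk_adj_cc hk0 (by rw [hum]; omega) hwk (Ne.symm hwu)

theorem gk_low (hk : 3 ≤ k) {W : Finset (Fin (3*k))} (hW : AdjRes (Gk k) W) :
    k ≤ W.card := by
  have hsub : Finset.range k ⊆ W.image (fun w => w.val % k) := by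
    intro m hm
    rw [Finset.mem_range] at hm
    obtain ⟨w, hw, he⟩ := gk_hits hk hW m hm
    exact Finset.mem_image.mpr ⟨w, hw, he⟩
  calc k = (Finset.range k).card := (Finset.card_range k).symm
  _ ≤ (W.image (fun w => w.val % k)).card := Finset.card_le_card hsub
  _ ≤ W.card := Finset.card_image_le

end gk2

section gk3
variable {k : ℕ}

theorem gk_uniq (hk : 3 ≤ k) {B : Finset (Fin (3*k))} (hB : AdjRes (Gk k) B)
    (hcard : B.card = k) : B = Ak k := by
  have hk0 : 0 < k := by omega
  -- the mod-k image of B is exactly range k, and val % k is injective on B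
  have hsub : Finset.range k ⊆ B.image (fun w => w.val % k) := by
    intro m hm
    rw [Finset.mem_range] at hm
    obtain ⟨w, hw, he⟩ := gk_hits hk hB m hm
    exact Finset.mem_image.mpr ⟨w, hw, he⟩
  have hsub2 : B.image (fun w => w.val % k) ⊆ Finset.range k := by
    intro m hm
    rw [Finset.mem_range]
    obtain ⟨w, _, he⟩ := Finset.mem_image.mp hm
    rw [← he]
    exact Nat.mod_lt _ hk0
  have himg : B.image (fun w => w.val % k) = Finset.range k :=
    Finset.Subset.antisymm hsub2 hsub
  have hinj : Set.InjOn (fun w : Fin (3*k) => w.val % k) B :=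
    Finset.card_image_iff.mp (by rw [himg, Finset.card_range, hcard])
  have huniqm : ∀ w ∈ B, ∀ w' ∈ B, w.val % k = w'.val % k → w = w' := by
    intro w hw w' hw' h
    exact hinj (Finset.mem_coe.mpr hw) (Finset.mem_coe.mpr hw') h
  -- every member of B is a pendant vertex
  have hBsub : ∀ x ∈ B, x.val < k := by
    intro x hx
    by_contra hxk
    push_neg at hxk
    have hx3 := x.isLt
    have hi0k : x.val % k < k := Nat.mod_lt _ hk0
    set i0 := x.val % k with hi0def
    have ha0 : (⟨i0, by omega⟩ : Fin (3*k)) ∉ B := by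
      intro hmem
      have he := huniqm _ hmem x hx (by
        show i0 % k = x.val % k
        rw [Nat.mod_eq_of_lt hi0k])
      have := congrArg Fin.val he
      simp only [Fin.val_mk] at this
      omega
    by_cases hall : ∀ i1, (h1 : i1 < k) → i1 ≠ i0 → (⟨i1, by omega⟩ : Fin (3*k)) ∈ B
    · -- case (ii) : B contains all pendants except a_{i0}
      obtain ⟨m0, hm0k, hm0⟩ := exists_pred hk0 hi0k
      obtain ⟨m1, hm1k, hm1⟩ := exists_pred hk0 hm0k
      have hm0i0 : m0 ≠ i0 := by
        intro h
        rw [h] at hm0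
        exact s_ne (by omega) hi0k hm0
      have hm1i0 : m1 ≠ i0 := by
        intro h
        rw [h] at hm1
        rw [← hm1] at hm0
        exact ss_ne hk hi0k hm0
      have hma : (⟨m0, by omega⟩ : Fin (3*k)) ∈ B := hall m0 hm0k hm0i0
      have hmb : (⟨m1, by omega⟩ : Fin (3*k)) ∈ B := hall m1 hm1k hm1i0
      have hu1 : (⟨k + m1, by omega⟩ : Fin (3*k)) ∉ B := by
        intro h
        have he := huniqm _ h _ hmb (by
          show (k + m1) % k = m1 % k
          rw [umod hk0 hm1k, Nat.mod_eq_of_lt hm1k])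
        have := congrArg Fin.val he
        simp only [Fin.val_mk] at this
        omega
      have hv0 : (⟨2*k + m0, by omega⟩ : Fin (3*k)) ∉ B := by
        intro h
        have he := huniqm _ h _ hma (by
          show (2*k + m0) % k = m0 % k
          rw [vmod hk0 hm0k, Nat.mod_eq_of_lt hm0k])
        have := congrArg Fin.val he
        simp only [Fin.val_mk] at this
        omega
      have hne : (⟨k + m1, by omega⟩ : Fin (3*k)) ≠ ⟨2*k + m0, by omega⟩ :=
        Fin.ne_of_val_ne (show k + m1 ≠ 2*k + m0 by omega)
      rcases hB _ _ hne with h | h | ⟨w, hw, hiff⟩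
      · exact hu1 h
      · exact hv0 h
      apply hiff
      by_cases hwk : w.val < k
      · have hji0 : w.val ≠ i0 := by
          intro h
          apply ha0
          have : w = (⟨i0, by omega⟩ : Fin (3*k)) := Fin.ext h
          rw [← this]
          exact hw
        have h1 := gk_adj_au hk0 hwk hm1k (show ((⟨k + m1, by omega⟩ : Fin (3*k))).val = k + m1 from rfl)
        have h2 := gk_adj_av hk0 hwk hm0k (show ((⟨2*k + m0, by omega⟩ : Fin (3*k))).val = 2*k + m0 from rfl)
        rw [hm1] at h1
        rw [hm0] at h2
        constructor
        · intro ha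
          exact (Gk k).adj_symm (h2.mpr ⟨hji0, h1.mp ((Gk k).adj_symm ha)⟩)
        · intro hb
          exact (Gk k).adj_symm (h1.mpr (h2.mp ((Gk k).adj_symm hb)).2)
      · push_neg at hwk
        have hne1 : w ≠ ⟨k + m1, by omega⟩ := fun e => hu1 (e ▸ hw)
        have hne2 : w ≠ ⟨2*k + m0, by omega⟩ := fun e => hv0 (e ▸ hw)
        constructor
        · intro _
          exact gk_adj_cc hk0 (show k ≤ 2*k + m0 by omega) hwk (Ne.symm hne2)
        · intro _
          exact gk_adj_cc hk0 (show k ≤ k + m1 by omega) hwk (Ne.symm hne1)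
    · -- case (i) : another pendant a_{i1} missing from B
      push_neg at hall
      obtain ⟨i1, hi1k, hi1ne, ha1⟩ := hall
      obtain ⟨m, hmk, hms⟩ := exists_pred hk0 hi0k
      obtain ⟨m', hm'k, hm's⟩ := exists_pred hk0 hi1k
      have hmm' : m ≠ m' := by
        intro h
        rw [h, hm's] at hms
        exact hi1ne hms
      -- key : construct a clique vertex in class t, outside B, adjacent to everything in B
      have key : ∀ t st, (ht : t < k) → (hst : st < k) → (hts : (t+1) % k = st) →
          (hnotin : (⟨st, by omega⟩ : Fin (3*k)) ∉ B) →
          ∃ c : Fin (3*k), c ∉ B ∧ c.val % k = t ∧ k ≤ c.val ∧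
            ∀ w ∈ B, (Gk k).Adj c w := by
        intro t st htk hstk hts hast
        have hforb : ∀ j, (hj : j < k) → (hjB : (⟨j, by omega⟩ : Fin (3*k)) ∈ B) → j ≠ st := by
          intro j hj hjB he
          apply hast
          have : (⟨j, by omega⟩ : Fin (3*k)) = ⟨st, by omega⟩ := Fin.ext he
          rw [← this]
          exact hjB
        by_cases hut : (⟨k + t, by omega⟩ : Fin (3*k)) ∈ B
        · -- a_t and v_t are then not in B ; use v_t
          have hat : (⟨t, by omega⟩ : Fin (3*k)) ∉ B := by
            intro h
            have he := huniqm _ h _ hut (by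
              show t % k = (k + t) % k
              rw [umod hk0 htk, Nat.mod_eq_of_lt htk])
            have := congrArg Fin.val he
            simp only [Fin.val_mk] at this
            omega
          have hvt : (⟨2*k + t, by omega⟩ : Fin (3*k)) ∉ B := by
            intro h
            have he := huniqm _ h _ hut (by
              show (2*k + t) % k = (k + t) % k
              rw [umod hk0 htk, vmod hk0 htk])
            have := congrArg Fin.val he
            simp only [Fin.val_mk] at this
            omega
          refine ⟨⟨2*k + t, by omega⟩, hvt, vmod hk0 htk, show k ≤ 2*k + t by omega, ?_⟩
          intro w hw
          by_cases hwk : w.val < k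
          · have h2 := gk_adj_av hk0 hwk htk (show ((⟨2*k + t, by omega⟩ : Fin (3*k))).val = 2*k + t from rfl)
            rw [hts] at h2
            apply (Gk k).adj_symm
            apply h2.mpr
            have hwm : w = (⟨w.val, by omega⟩ : Fin (3*k)) := Fin.ext rfl
            refine ⟨hforb w.val hwk (by rw [← hwm]; exact hw), ?_⟩
            intro he
            apply hat
            have : w = (⟨t, by omega⟩ : Fin (3*k)) := Fin.ext he
            rw [← this]
            exact hw
          · push_neg at hwk
            exact gk_adj_cc hk0 (show k ≤ 2*k + t by omega) hwk
              (fun e => hvt (e ▸ hw))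
        · refine ⟨⟨k + t, by omega⟩, hut, umod hk0 htk, show k ≤ k + t by omega, ?_⟩
          intro w hw
          by_cases hwk : w.val < k
          · have h1 := gk_adj_au hk0 hwk htk (show ((⟨k + t, by omega⟩ : Fin (3*k))).val = k + t from rfl)
            rw [hts] at h1
            apply (Gk k).adj_symm
            apply h1.mpr
            have hwm : w = (⟨w.val, by omega⟩ : Fin (3*k)) := Fin.ext rfl
            exact hforb w.val hwk (by rw [← hwm]; exact hw)
          · push_neg at hwk
            exact gk_adj_cc hk0 (show k ≤ k + t by omega) hwk
              (fun e => hut (e ▸ hw))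
      obtain ⟨c, hc, hcm, hck, hcadj⟩ := key m i0 hmk hi0k hms ha0
      obtain ⟨c', hc', hcm', hck', hcadj'⟩ := key m' i1 hm'k hi1k hm's ha1
      have hne : c ≠ c' := by
        intro e
        apply hmm'
        rw [← hcm, ← hcm', e]
      rcases hB c c' hne with h | h | ⟨w, hw, hiff⟩
      · exact hc h
      · exact hc' h
      · exact hiff (iff_of_true (hcadj w hw) (hcadj' w hw))
  have hsubA : B ⊆ Ak k := fun x hx => mem_Ak.mpr (hBsub x hx)
  exact Finset.eq_of_subset_of_card_le hsubA (by rw [hcard, card_Ak])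

theorem bigk (k : ℕ) (hk : 3 ≤ k) :
    ∃ G : SimpleGraph (Fin (3*k)), G.Connected ∧ UniquelyKDimensional G k := by
  have hk0 : 0 < k := by omega
  have hd2 := gk_diam2 hk
  have hne : Nonempty (Fin (3*k)) := ⟨⟨0, by omega⟩⟩
  refine ⟨Gk k, hd2.connected, ?_⟩
  apply main_builder (Gk k) (Ak k) k
  · exact (hd2.resolving_iff (Ak k)).mpr (gk_resA hk)
  · exact card_Ak
  · intro W hW
    exact gk_low hk ((hd2.resolving_iff W).mp hW)
  · intro Bs hBs hBcard
    exact gk_uniq hk ((hd2.resolving_iff Bs).mp hBs) hBcard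

end gk3

def g2rel (x y : Fin 6) : Bool :=
  decide ((x.val, y.val) ∈ [(0,1),(0,2),(0,3),(0,4),(0,5),(1,2),(1,3),(1,5),(2,3),(2,4)])

def G2 : SimpleGraph (Fin 6) where
  Adj x y := g2rel x y ∨ g2rel y x
  symm := by constructor; intro x y h; exact h.symm
  loopless := ⟨fun x => (by decide : ∀ z : Fin 6, ¬(g2rel z z = true ∨ g2rel z z = true)) x⟩

instance : DecidableRel G2.Adj := fun x y =>
  inferInstanceAs (Decidable (g2rel x y ∨ g2rel y x))

theorem g2_diam2 : Diam2 G2 := by unfold Diam2; decide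

theorem k2case : ∃ G : SimpleGraph (Fin 6), G.Connected ∧ UniquelyKDimensional G 2 := by
  have h2 := g2_diam2
  refine ⟨G2, h2.connected, ?_⟩
  apply main_builder G2 ({4, 5} : Finset (Fin 6)) 2
  · exact (h2.resolving_iff _).mpr (by unfold AdjRes; decide)
  · decide
  · intro W hW
    have h := (h2.resolving_iff W).mp hW
    clear hW
    revert W
    unfold AdjRes
    decide
  · intro B hB hcard
    have h := (h2.resolving_iff B).mp hB
    clear hB
    revert B
    unfold AdjRes
    decide


theorem stmt17 (k : ℕ) (hk : 2 ≤ k) :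
    ∃ G : SimpleGraph (Fin (3 * k)), G.Connected ∧ UniquelyKDimensional G k := by
  rcases Nat.lt_or_ge k 3 with h | h
  · have hk2 : k = 2 := by omega
    subst hk2
    exact k2case
  · exact bigk k h
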